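/- If α:Ω→ℝ is measurable and satisfies the coboundary equation b(ω)=α(ω)−r(ω)α(Tω) for P-almost every ω, then α=X P-almost everywhere. -/

import Mathlib

set_option linter.unusedSectionVars false
set_option linter.unusedVariables false
set_option maxHeartbeats 1000000

open MeasureTheory Filter Topology
open scoped ENNReal NNReal

namespace CoboundaryAux

variable {Ω : Type*} [MeasurableSpace Ω]

noncomputable def S (g : Ω → ℝ) (T : Ω → Ω) (n : ℕ) (ω : Ω) : ℝ :=
  ∑ k ∈ Finset.range n, g (T^[k] ω)

noncomputable def M (g : Ω → ℝ) (T : Ω → Ω) : ℕ → Ω → ℝ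
  | 0, _ => 0
  | (N+1), ω => max (M g T N ω) (S g T (N+1) ω)

variable {g : Ω → ℝ} {T : Ω → Ω}

lemma S_zero (ω : Ω) : S g T 0 ω = 0 := by simp [S]

lemma S_succ' (n : ℕ) (ω : Ω) : S g T (n+1) ω = g ω + S g T n (T ω) := by
  simp only [S, Finset.sum_range_succ']
  simp [Function.iterate_succ_apply, add_comm]

lemma S_add (k m : ℕ) (ω : Ω) : S g T (k + m) ω = S g T k ω + S g T m (T^[k] ω) := by
  induction m with
  | zero => simp [S]
  | succ m ih =>
    have h1 : S g T (k + (m+1)) ω = S g T (k+m) ω + g (T^[k+m] ω) := by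
      simp [S, ← Nat.add_assoc, Finset.sum_range_succ]
    have h2 : S g T (m+1) (T^[k] ω) = S g T m (T^[k] ω) + g (T^[m] (T^[k] ω)) := by
      simp [S, Finset.sum_range_succ]
    rw [h1, h2, ih, Nat.add_comm k m, Function.iterate_add_apply]
    ring

lemma M_nonneg (N : ℕ) (ω : Ω) : 0 ≤ M g T N ω := by
  induction N with
  | zero => simp [M]
  | succ N ih => exact le_max_of_le_left ih

lemma M_mono (ω : Ω) : Monotone (fun N => M g T N ω) :=
  monotone_nat_of_le_succ fun N => le_max_left _ _

lemma S_le_M {n N : ℕ} (h : n ≤ N) (ω : Ω) : S g T n ω ≤ M g T N ω := by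
  induction N with
  | zero => simp_all [S, M]
  | succ N ih =>
    rcases Nat.lt_or_ge n (N+1) with h' | h'
    · exact le_max_of_le_left (ih (Nat.lt_succ_iff.mp h'))
    · have : n = N + 1 := le_antisymm h h'
      subst this; exact le_max_right _ _

lemma M_le_zero {ω : Ω} (h : ∀ n, S g T n ω ≤ 0) (N : ℕ) : M g T N ω ≤ 0 := by
  induction N with
  | zero => simp [M]
  | succ N ih => exact max_le ih (h (N+1))

lemma M_key (N : ℕ) (ω : Ω) : M g T N ω ≤ max 0 (g ω + M g T N (T ω)) := by
  induction N with
  | zero => simp [M]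
  | succ N ih =>
    refine max_le ?_ ?_
    · calc M g T N ω ≤ max 0 (g ω + M g T N (T ω)) := ih
        _ ≤ max 0 (g ω + M g T (N+1) (T ω)) := by
            gcongr; exact M_mono (T ω) (Nat.le_succ N)
    · have h1 : S g T (N+1) ω = g ω + S g T N (T ω) := S_succ' N ω
      have h2 : S g T N (T ω) ≤ M g T (N+1) (T ω) := S_le_M (Nat.le_succ N) (T ω)
      calc S g T (N+1) ω ≤ g ω + M g T (N+1) (T ω) := by rw [h1]; linarith
        _ ≤ _ := le_max_right _ _

lemma measurable_S (hg : Measurable g) (hT : Measurable T) (n : ℕ) :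
    Measurable (S g T n) :=
  Finset.measurable_sum _ fun k _ => hg.comp (hT.iterate k)

lemma measurable_M (hg : Measurable g) (hT : Measurable T) (N : ℕ) :
    Measurable (M g T N) := by
  induction N with
  | zero => exact measurable_const
  | succ N ih => exact ih.max (measurable_S hg hT (N+1))

variable {P : Measure Ω}

lemma integrable_S (hTm : MeasurePreserving T P P) (hg : Integrable g P) (n : ℕ) :
    Integrable (S g T n) P := by
  refine integrable_finset_sum _ fun k _ => ?_
  exact ((hTm.iterate k).integrable_comp hg.aestronglyMeasurable).mpr hg

lemma integrable_M (hTm : MeasurePreserving T P P) (hg : Integrable g P) (N : ℕ) :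
    Integrable (M g T N) P := by
  induction N with
  | zero => exact integrable_zero _ _ _
  | succ N ih => exact ih.sup (integrable_S hTm hg (N+1))






variable (P : Measure Ω) [IsProbabilityMeasure P]

theorem maximal (hTm : MeasurePreserving T P P) (hgm : Measurable g)
    (hg : Integrable g P) (hneg : ∫ ω, g ω ∂P < 0) :
    0 < P {ω | ∀ n, S g T n ω ≤ 0} := by
  set A : ℕ → Set Ω := fun N => {ω | 0 < M g T N ω} with hA_def
  have hA : ∀ N, MeasurableSet (A N) :=
    fun N => measurableSet_lt measurable_const (measurable_M hgm hTm.measurable N)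
  have hmono : Monotone A := fun i j hij ω h => lt_of_lt_of_le h (M_mono (g := g) (T := T) ω hij)
  have step1 : ∀ N, 0 ≤ ∫ ω in A N, g ω ∂P := by
    intro N
    have hMi : Integrable (M g T N) P := integrable_M hTm hg N
    have hMT : Integrable (fun ω => M g T N (T ω)) P :=
      (hTm.integrable_comp hMi.aestronglyMeasurable).mpr hMi
    have key : ∀ ω ∈ A N, M g T N ω - M g T N (T ω) ≤ g ω := by
      intro ω hω
      have h := M_key (g := g) (T := T) N ω
      rcases le_max_iff.mp h with h' | h'
      · exact absurd (lt_of_lt_of_le hω h') (lt_irrefl 0)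
      · linarith
    have h2 : ∫ ω in A N, (M g T N ω - M g T N (T ω)) ∂P ≤ ∫ ω in A N, g ω ∂P :=
      setIntegral_mono_on (hMi.sub hMT).integrableOn hg.integrableOn (hA N) key
    have h3 : ∫ ω in A N, (M g T N ω - M g T N (T ω)) ∂P
        = ∫ ω in A N, M g T N ω ∂P - ∫ ω in A N, M g T N (T ω) ∂P :=
      integral_sub hMi.integrableOn hMT.integrableOn
    have h4 : ∫ ω in A N, M g T N ω ∂P = ∫ ω, M g T N ω ∂P := by
      have hsplit := integral_add_compl (hA N) hMi
      have hz : ∫ ω in (A N)ᶜ, M g T N ω ∂P = 0 := by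
        refine setIntegral_eq_zero_of_forall_eq_zero fun ω hω => ?_
        exact le_antisymm (not_lt.mp hω) (M_nonneg (g := g) (T := T) N ω)
      linarith
    have h5 : ∫ ω in A N, M g T N (T ω) ∂P ≤ ∫ ω, M g T N (T ω) ∂P :=
      setIntegral_le_integral hMT (ae_of_all _ fun ω => M_nonneg (g := g) (T := T) N (T ω))
    have h6 : ∫ ω, M g T N (T ω) ∂P = ∫ ω, M g T N ω ∂P := by
      have hmap := integral_map (μ := P) hTm.measurable.aemeasurable
        ((measurable_M hgm hTm.measurable N).aestronglyMeasurable (μ := P.map T))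
      rw [hTm.map_eq] at hmap
      exact hmap.symm
    linarith
  set G : Set Ω := ⋃ N, A N with hG_def
  have htend : Tendsto (fun N => ∫ ω in A N, g ω ∂P) atTop (𝓝 (∫ ω in G, g ω ∂P)) :=
    tendsto_setIntegral_of_monotone hA hmono hg.integrableOn
  have hG : 0 ≤ ∫ ω in G, g ω ∂P := ge_of_tendsto' htend step1
  have hset : {ω | ∀ n, S g T n ω ≤ 0} = Gᶜ := by
    ext ω
    simp only [hG_def, hA_def, Set.mem_compl_iff, Set.mem_iUnion, Set.mem_setOf_eq, not_exists,
      not_lt]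
    constructor
    · exact fun h N => M_le_zero h N
    · intro h n
      exact le_trans (S_le_M le_rfl ω) (h n)
  rw [hset]
  by_contra hcon
  have hzero : P Gᶜ = 0 := le_antisymm (not_lt.mp hcon) zero_le
  have hGc : ∫ ω in Gᶜ, g ω ∂P = 0 := by rw [Measure.restrict_eq_zero.mpr hzero]; exact integral_zero_measure _
  have hGm : MeasurableSet G := MeasurableSet.iUnion hA
  have := integral_add_compl hGm hg
  linarith

theorem ae_bounded (hT : Ergodic T P) (hgm : Measurable g)
    (hg : Integrable g P) (hneg : ∫ ω, g ω ∂P < 0) :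
    ∀ᵐ ω ∂P, ∃ C, ∀ n, S g T n ω ≤ C := by
  have hTm := hT.toMeasurePreserving
  set B : Set Ω := {ω | ∀ n, S g T n ω ≤ 0} with hB_def
  have hBm : MeasurableSet B := by
    have : B = ⋂ n, {ω | S g T n ω ≤ 0} := by ext ω; simp [hB_def]
    rw [this]
    exact MeasurableSet.iInter fun n =>
      measurableSet_le (measurable_S hgm hTm.measurable n) measurable_const
  have hBpos : 0 < P B := maximal P hTm hgm hg hneg
  set C : Set Ω := ⋃ k, T^[k] ⁻¹' B with hC_def
  have hCm : MeasurableSet C :=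
    MeasurableSet.iUnion fun k => hBm.preimage (hTm.measurable.iterate k)
  have hsub : T ⁻¹' C ⊆ C := by
    intro ω hω
    obtain ⟨k, hk⟩ := Set.mem_iUnion.mp hω
    refine Set.mem_iUnion.mpr ⟨k+1, ?_⟩
    simpa [Function.iterate_succ_apply] using hk
  rcases hT.ae_empty_or_univ_of_preimage_ae_le hCm.nullMeasurableSet
      (HasSubset.Subset.eventuallyLE hsub) with h | h
  · exfalso
    have hCzero : P C = 0 := ae_eq_empty.mp h
    have : P B ≤ P C := by
      refine measure_mono ?_
      intro ω hω
      exact Set.mem_iUnion.mpr ⟨0, by simpa using hω⟩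
    rw [hCzero] at this
    exact absurd (le_antisymm this zero_le) (ne_of_gt hBpos)
  · have hae : ∀ᵐ ω ∂P, ω ∈ C := by
      have := ae_eq_univ.mp h
      filter_upwards [measure_eq_zero_iff_ae_notMem.mp this] with ω hω
      simpa using hω
    filter_upwards [hae] with ω hω
    obtain ⟨k, hk⟩ := Set.mem_iUnion.mp hω
    refine ⟨M g T k ω, fun n => ?_⟩
    rcases le_or_gt n k with h' | h'
    · exact S_le_M h' ω
    · obtain ⟨m, rfl⟩ := Nat.exists_eq_add_of_le h'.le
      rw [S_add]
      have h1 : S g T m (T^[k] ω) ≤ 0 := hk m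
      have h2 : S g T k ω ≤ M g T k ω := S_le_M le_rfl ω
      linarith

theorem prod_tendsto_zero (hT : Ergodic T P) {r : Ω → ℝ} (hr : Measurable r)
    (hrpos : ∀ ω, 0 < r ω)
    (hlogInt : Integrable (fun ω => Real.log (r ω)) P)
    (hlogNeg : ∫ ω, Real.log (r ω) ∂P < 0) :
    ∀ᵐ ω ∂P, Tendsto (fun n => ∏ k ∈ Finset.range n, r (T^[k] ω)) atTop (𝓝 0) := by
  set c : ℝ := -(∫ ω, Real.log (r ω) ∂P) / 2 with hc
  have hcpos : 0 < c := by simp only [hc]; linarith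
  set g : Ω → ℝ := fun ω => Real.log (r ω) + c with hg_def
  have hgm : Measurable g := (hr.log).add_const c
  have hg : Integrable g P := hlogInt.add (integrable_const c)
  have hneg : ∫ ω, g ω ∂P < 0 := by
    have : ∫ ω, g ω ∂P = (∫ ω, Real.log (r ω) ∂P) + c := by
      rw [hg_def]
      rw [integral_add hlogInt (integrable_const c)]
      simp
    rw [this, hc]; linarith
  have hae := ae_bounded P hT hgm hg hneg
  filter_upwards [hae] with ω hC
  obtain ⟨C, hC⟩ := hC
  have hS : ∀ n : ℕ, ∑ k ∈ Finset.range n, Real.log (r (T^[k] ω)) ≤ C - n * c := by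
    intro n
    have h := hC n
    have : S g T n ω = (∑ k ∈ Finset.range n, Real.log (r (T^[k] ω))) + n * c := by
      simp only [S, hg_def, Finset.sum_add_distrib, Finset.sum_const, Finset.card_range,
        nsmul_eq_mul]
    linarith [this ▸ h]
  have hbound : ∀ n : ℕ, ∏ k ∈ Finset.range n, r (T^[k] ω)
      ≤ Real.exp C * (Real.exp (-c)) ^ n := by
    intro n
    have hprod : ∏ k ∈ Finset.range n, r (T^[k] ω)
        = Real.exp (∑ k ∈ Finset.range n, Real.log (r (T^[k] ω))) := by
      rw [Real.exp_sum]
      exact Finset.prod_congr rfl fun k _ => (Real.exp_log (hrpos _)).symm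
    rw [hprod]
    calc Real.exp (∑ k ∈ Finset.range n, Real.log (r (T^[k] ω)))
        ≤ Real.exp (C - n * c) := Real.exp_le_exp.mpr (hS n)
      _ = Real.exp C * (Real.exp (-c)) ^ n := by
          rw [← Real.exp_nat_mul, ← Real.exp_add]; ring_nf
  have hgeo : Tendsto (fun n : ℕ => Real.exp C * (Real.exp (-c)) ^ n) atTop (𝓝 0) := by
    have h1 : Tendsto (fun n : ℕ => (Real.exp (-c)) ^ n) atTop (𝓝 0) :=
      tendsto_pow_atTop_nhds_zero_of_lt_one (Real.exp_nonneg _)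
        (Real.exp_lt_one_iff.mpr (by linarith))
    simpa using h1.const_mul (Real.exp C)
  refine squeeze_zero (fun n => Finset.prod_nonneg fun k _ => (hrpos _).le) hbound hgeo


end CoboundaryAux

open MeasureTheory Filter Topology



theorem coboundary_unique
    {Ω : Type*} [MeasurableSpace Ω] (P : Measure Ω) [IsProbabilityMeasure P]
    (T : Ω → Ω) (hT : Ergodic T P)
    (b r : Ω → ℝ) (hb : Measurable b) (hr : Measurable r)
    (hrpos : ∀ ω, 0 < r ω)
    (hbInt : Integrable b P)
    (hlogInt : Integrable (fun ω => Real.log (r ω)) P)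
    (hlogNeg : ∫ ω, Real.log (r ω) ∂P < 0)
    (X : Ω → ℝ) (hX : Measurable X)
    (hXsum : ∀ᵐ ω ∂P,
      HasSum (fun n : ℕ => (∏ k ∈ Finset.range n, r (T^[k] ω)) * b (T^[n] ω)) (X ω))
    (α : Ω → ℝ) (hα : Measurable α)
    (hcob : ∀ᵐ ω ∂P, b ω = α ω - r ω * α (T ω)) :
    ∀ᵐ ω ∂P, α ω = X ω := by
  have hTm := hT.toMeasurePreserving
  set D : Ω → ℝ := fun ω => α ω - X ω with hD_def
  have hD : Measurable D := hα.sub hX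
  set R : ℕ → Ω → ℝ := fun n ω => ∏ k ∈ Finset.range n, r (T^[k] ω) with hR_def
  have hRm : ∀ n, Measurable (R n) :=
    fun n => Finset.measurable_prod _ fun k _ => hr.comp (hTm.measurable.iterate k)
  have hRnonneg : ∀ n ω, 0 ≤ R n ω := fun n ω => Finset.prod_nonneg fun k _ => (hrpos _).le
  -- Step A: the recursion for X
  have hrec : ∀ᵐ ω ∂P, X ω = b ω + r ω * X (T ω) := by
    have hXT : ∀ᵐ ω ∂P,
        HasSum (fun n : ℕ => (∏ k ∈ Finset.range n, r (T^[k] (T ω))) * b (T^[n] (T ω)))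
          (X (T ω)) := hT.quasiMeasurePreserving.ae hXsum
    filter_upwards [hXsum, hXT] with ω h1 h2
    have h3 := (hasSum_nat_add_iff' (f := fun n : ℕ =>
      (∏ k ∈ Finset.range n, r (T^[k] ω)) * b (T^[n] ω)) 1).mpr h1
    have h4 := h2.mul_left (r ω)
    have heq : (fun n : ℕ => (∏ k ∈ Finset.range (n+1), r (T^[k] ω)) * b (T^[n+1] ω))
        = fun n : ℕ =>
          r ω * ((∏ k ∈ Finset.range n, r (T^[k] (T ω))) * b (T^[n] (T ω))) := by
      funext n
      rw [Finset.prod_range_succ']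
      simp only [Function.iterate_succ_apply, Function.iterate_zero_apply]
      ring
    rw [heq] at h3
    have h5 := h3.unique h4
    simp only [Finset.range_one, Finset.sum_singleton, Finset.range_zero, Finset.prod_empty,
      Function.iterate_zero_apply, one_mul] at h5
    linarith
  -- Step B: the recursion for D
  have hDrec : ∀ᵐ ω ∂P, D ω = r ω * D (T ω) := by
    filter_upwards [hcob, hrec] with ω h1 h2
    simp only [hD_def]
    rw [mul_sub]
    have : α ω = b ω + r ω * α (T ω) := by linarith
    linarith
  -- Step C: iterate the recursion
  have hiter : ∀ᵐ ω ∂P, ∀ n, D ω = R n ω * D (T^[n] ω) := by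
    have hk : ∀ k : ℕ, ∀ᵐ ω ∂P, D (T^[k] ω) = r (T^[k] ω) * D (T (T^[k] ω)) :=
      fun k => (hTm.iterate k).quasiMeasurePreserving.ae hDrec
    have hall := ae_all_iff.mpr hk
    filter_upwards [hall] with ω h
    intro n
    induction n with
    | zero => simp [hR_def]
    | succ n ih =>
      have : R (n+1) ω = R n ω * r (T^[n] ω) := by
        simp [hR_def, Finset.prod_range_succ]
      rw [this, ih, h n, Function.iterate_succ_apply']
      ring
  -- Step D: conclude
  have hRzero := CoboundaryAux.prod_tendsto_zero P hT hr hrpos hlogInt hlogNeg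
  have hInM : TendstoInMeasure P R atTop (fun _ => (0 : ℝ)) :=
    tendstoInMeasure_of_tendsto_ae (fun n => (hRm n).aestronglyMeasurable)
      (by filter_upwards [hRzero] with ω h; simpa using h)
  have key : ∀ ε : ℝ, 0 < ε → P {ω | ε ≤ |D ω|} = 0 := by
    intro ε hε
    refine le_antisymm ?_ zero_le
    refine ENNReal.le_of_forall_pos_le_add fun η hη _ => ?_
    rw [zero_add]
    have hη2 : (0 : ℝ≥0∞) < (η : ℝ≥0∞) / 2 :=
      ENNReal.half_pos (by exact_mod_cast hη.ne')
    -- choose M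
    have hanti : Antitone (fun M : ℕ => {ω | (M : ℝ) < |D ω|}) := by
      intro i j hij ω hω
      exact lt_of_le_of_lt (show (i:ℝ) ≤ (j:ℝ) by exact_mod_cast hij) hω
    have hDM : Tendsto (fun M : ℕ => P {ω | (M : ℝ) < |D ω|}) atTop (𝓝 0) := by
      have h0 : ⋂ M : ℕ, {ω | (M : ℝ) < |D ω|} = ∅ := by
        ext ω
        simp only [Set.mem_iInter, Set.mem_setOf_eq, Set.mem_empty_iff_false, iff_false,
          not_forall, not_lt]
        exact (exists_nat_gt |D ω|).imp fun n hn => hn.le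
      have := tendsto_measure_iInter_atTop (μ := P)
        (fun M => (measurableSet_lt measurable_const hD.abs).nullMeasurableSet)
        hanti ⟨0, measure_ne_top _ _⟩
      rw [h0] at this
      simpa [Function.comp_def] using this
    obtain ⟨M₀, hM₀⟩ := (hDM.eventually_lt_const hη2).exists
    set M : ℕ := M₀ + 1 with hM_def
    have hM : P {ω | (M : ℝ) < |D ω|} < (η : ℝ≥0∞) / 2 :=
      lt_of_le_of_lt (measure_mono (hanti (Nat.le_succ M₀))) hM₀
    have hMpos : (0 : ℝ) < M := by positivity
    -- choose n
    have hr' := tendstoInMeasure_iff_dist.mp hInM (ε / M) (div_pos hε hMpos)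
    obtain ⟨n, hn⟩ := (hr'.eventually_lt_const hη2).exists
    -- a.e. inclusion
    have hincl : ∀ᵐ ω ∂P, ω ∈ {ω | ε ≤ |D ω|} →
        ω ∈ ({ω | ε / M ≤ dist (R n ω) 0} ∪ T^[n] ⁻¹' {ω | (M : ℝ) < |D ω|}) := by
      filter_upwards [hiter] with ω hω h
      replace h : ε ≤ |D ω| := h
      by_contra hcon
      simp only [Set.mem_union, Set.mem_setOf_eq, Set.mem_preimage, not_or, not_le,
        not_lt] at hcon
      obtain ⟨h1, h2⟩ := hcon
      rw [Real.dist_eq, sub_zero, abs_of_nonneg (hRnonneg n ω)] at h1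
      have habs : |D ω| = R n ω * |D (T^[n] ω)| := by
        rw [hω n, abs_mul, abs_of_nonneg (hRnonneg n ω)]
      have : |D ω| < ε := by
        calc |D ω| = R n ω * |D (T^[n] ω)| := habs
          _ ≤ R n ω * M := by
              exact mul_le_mul_of_nonneg_left h2 (hRnonneg n ω)
          _ < (ε / M) * M := by exact mul_lt_mul_of_pos_right h1 hMpos
          _ = ε := div_mul_cancel₀ ε hMpos.ne'
      linarith
    have hle : P {ω | ε ≤ |D ω|}
        ≤ P ({ω | ε / M ≤ dist (R n ω) 0} ∪ T^[n] ⁻¹' {ω | (M : ℝ) < |D ω|}) :=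
      measure_mono_ae (hincl.mono fun ω h => h)
    have hpre : P (T^[n] ⁻¹' {ω | (M : ℝ) < |D ω|}) = P {ω | (M : ℝ) < |D ω|} :=
      (hTm.iterate n).measure_preimage
        (measurableSet_lt measurable_const hD.abs).nullMeasurableSet
    calc P {ω | ε ≤ |D ω|} ≤ _ := hle
      _ ≤ P {ω | ε / M ≤ dist (R n ω) 0} + P (T^[n] ⁻¹' {ω | (M : ℝ) < |D ω|}) :=
          measure_union_le _ _
      _ ≤ (η : ℝ≥0∞) / 2 + (η : ℝ≥0∞) / 2 := by
          rw [hpre]; exact add_le_add hn.le hM.le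
      _ = (η : ℝ≥0∞) := ENNReal.add_halves _
  -- finish
  have hj : ∀ j : ℕ, ∀ᵐ ω ∂P, ¬ ((1 / ((j : ℝ) + 1)) ≤ |D ω|) := by
    intro j
    have h := key (1 / ((j : ℝ) + 1)) (by positivity)
    exact measure_eq_zero_iff_ae_notMem.mp h
  filter_upwards [ae_all_iff.mpr hj] with ω h
  by_contra hne
  have hpos : 0 < |D ω| := abs_pos.mpr (sub_ne_zero.mpr hne)
  obtain ⟨j, hjlt⟩ := exists_nat_one_div_lt hpos
  exact h j hjlt.le
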